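/- Let d ≥ 1 and work in EuclideanSpace ℝ (Fin d) with standard basis vectors e_i = EuclideanSpace.single i 1. With w the regular d-simplex vertices (w i = e_i for i < d, w_d = α • Σ_i e_i, α = (1 − √(d+1))/d), centroid c = (1/(d+1)) • Σ_i w i, and normalized centered vertices u i = ‖w i − c‖⁻¹ • (w i − c), the configuration is balanced: Σ_{i : Fin (d+1)} u i = 0. -/

import Mathlib

/-- The normalized centered vertices of the regular `d`-simplex (the
`d`-Simplex fixed-classifier weights) sum to zero: the configuration is
balanced. -/
theorem simplex_classifier_balanced (d : ℕ) (hd : 1 ≤ d)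
    (e : Fin d → EuclideanSpace ℝ (Fin d))
    (he : ∀ i, e i = EuclideanSpace.single i 1)
    (α : ℝ) (hα : α = (1 - Real.sqrt (d + 1)) / d)
    (w : Fin (d + 1) → EuclideanSpace ℝ (Fin d))
    (hw : ∀ i : Fin (d + 1),
      w i = if h : (i : ℕ) < d then e ⟨i, h⟩ else α • ∑ j : Fin d, e j)
    (c : EuclideanSpace ℝ (Fin d))
    (hc : c = (1 / (d + 1) : ℝ) • ∑ i : Fin (d + 1), w i)
    (u : Fin (d + 1) → EuclideanSpace ℝ (Fin d))
    (hu : ∀ i, u i = ‖w i - c‖⁻¹ • (w i - c)) :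
    ∑ i : Fin (d + 1), u i = 0 := by
  have hDpos : (0:ℝ) < d := by exact_mod_cast Nat.lt_of_lt_of_le Nat.zero_lt_one hd
  have hD1 : (0:ℝ) < (d:ℝ) + 1 := by positivity
  set s : ℝ := Real.sqrt (d + 1) with hsdef
  have hs2 : s ^ 2 = (d:ℝ) + 1 := Real.sq_sqrt (by positivity)
  have hspos : 0 < s := Real.sqrt_pos.2 (by positivity)
  set β : ℝ := (1 + α) / ((d:ℝ) + 1) with hβdef
  -- coordinates of S
  have hSapply : ∀ k : Fin d, (∑ j : Fin d, e j) k = 1 := by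
    intro k
    have h : (∑ j : Fin d, e j) k = ∑ j : Fin d, e j k :=
      by rw [WithLp.ofLp_sum]; exact Finset.sum_apply k Finset.univ (fun j => e j)
    rw [h]
    simp [he, EuclideanSpace.single_apply]
  -- centroid
  have hsumw : ∑ i : Fin (d + 1), w i = (1 + α) • ∑ j : Fin d, e j := by
    rw [Fin.sum_univ_castSucc]
    have h1 : ∀ i : Fin d, w (Fin.castSucc i) = e i := by
      intro i
      rw [hw]
      simp [Fin.is_lt]
    have h2 : w (Fin.last d) = α • ∑ j : Fin d, e j := by
      rw [hw]; simp
    rw [h2, Finset.sum_congr rfl fun i _ => h1 i, add_smul, one_smul]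
  have hcS : c = β • ∑ j : Fin d, e j := by
    rw [hc, hsumw, smul_smul, hβdef]
    ring_nf
  -- coords of differences
  have hcoord : ∀ i : Fin (d + 1), ∀ j : Fin d,
      (w i - c) j = (if h : (i:ℕ) < d then (if j = ⟨i, h⟩ then (1:ℝ) else 0) else α) - β := by
    intro i j
    rw [hcS, hw]
    by_cases h : (i:ℕ) < d
    · rw [dif_pos h, dif_pos h]
      show e ⟨i, h⟩ j - β * (∑ j' : Fin d, e j') j = _
      rw [hSapply j, mul_one, he, EuclideanSpace.single_apply]
    · rw [dif_neg h, dif_neg h]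
      show α * (∑ j' : Fin d, e j') j - β * (∑ j' : Fin d, e j') j = α - β
      rw [hSapply j, mul_one, mul_one]
  -- scalar identities
  have h1 : (d:ℝ) * β ^ 2 + ((1 - β) ^ 2 - β ^ 2) = d / (d + 1) := by
    rw [hβdef, hα]
    field_simp
    linear_combination (d:ℝ) * hs2
  have hαβ : α - β = -1 / s := by
    rw [hβdef, hα]
    field_simp
    linear_combination (-(d:ℝ)) * hs2
  have h2 : (d:ℝ) * (α - β) ^ 2 = d / (d + 1) := by
    rw [hαβ, neg_div, neg_sq, div_pow, one_pow, hs2]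
    ring
  -- norm of each centered vertex
  have hnorm : ∀ i : Fin (d + 1), ‖w i - c‖ = Real.sqrt ((d:ℝ) / (d + 1)) := by
    intro i
    rw [EuclideanSpace.norm_eq]
    congr 1
    by_cases h : (i:ℕ) < d
    · have hterm : ∀ j : Fin d, ‖(w i - c) j‖ ^ 2
          = β ^ 2 + (if j = ⟨i, h⟩ then (1 - β) ^ 2 - β ^ 2 else 0) := by
        intro j
        rw [hcoord i j, dif_pos h, Real.norm_eq_abs, sq_abs]
        split <;> ring
      rw [Finset.sum_congr rfl fun j _ => hterm j, Finset.sum_add_distrib,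
        Finset.sum_const, Finset.sum_ite_eq', Finset.card_univ, Fintype.card_fin]
      simp only [Finset.mem_univ, if_true, nsmul_eq_mul]
      rw [← h1]
    · have hterm : ∀ j : Fin d, ‖(w i - c) j‖ ^ 2 = (α - β) ^ 2 := by
        intro j
        rw [hcoord i j, dif_neg h, Real.norm_eq_abs, sq_abs]
      rw [Finset.sum_congr rfl fun j _ => hterm j, Finset.sum_const,
        Finset.card_univ, Fintype.card_fin, nsmul_eq_mul, h2]
  -- sum of centered vertices is zero
  have hsum0 : ∑ i : Fin (d + 1), (w i - c) = 0 := by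
    rw [Finset.sum_sub_distrib, Finset.sum_const, Finset.card_univ, Fintype.card_fin,
      hc, ← Nat.cast_smul_eq_nsmul ℝ, smul_smul]
    push_cast
    rw [mul_one_div, div_self (by positivity), one_smul, sub_self]
  calc ∑ i : Fin (d + 1), u i
      = ∑ i : Fin (d + 1), (Real.sqrt ((d:ℝ) / (d + 1)))⁻¹ • (w i - c) := by
        refine Finset.sum_congr rfl fun i _ => ?_
        rw [hu, hnorm]
    _ = (Real.sqrt ((d:ℝ) / (d + 1)))⁻¹ • ∑ i : Fin (d + 1), (w i - c) := by
        rw [Finset.smul_sum]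
    _ = 0 := by rw [hsum0, smul_zero]
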